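/- The function ξ has the following properties: (i) ξ is positive and increasing on (0,k); (ii) ξ satisfies the ordinary differential equation (1/2)σ² ξ''(y) − μ ξ'(y) = r ξ(y) on (0,k) with the Neumann boundary condition ξ'(0) = 0; (iii) ξ is strictly convex, i.e. ξ''(y) > 0 for all y ∈ (0,k). -/

import Mathlib

open Real Set

noncomputable section

/-- `Ξ = sqrt(2r/σ² + μ²/σ⁴)`. -/
def Xi (r μ σ : ℝ) : ℝ := Real.sqrt (2 * r / σ ^ 2 + μ ^ 2 / σ ^ 4)

/-- The closed-form expression for the Laplace transform
`ξ(y) = E[e^{-r τ_D(k)} | D_0 = y]` of the drawdown time of a Brownian motion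
with drift `μ` and volatility `σ`. -/
def xiFormula (r μ σ k y : ℝ) : ℝ :=
  exp (μ / σ ^ 2 * (y - k)) * (sinh (Xi r μ σ * y) / sinh (Xi r μ σ * k)) +
    exp (μ / σ ^ 2 * y) * (sinh (Xi r μ σ * (k - y)) / sinh (Xi r μ σ * k)) *
      (exp (-(μ / σ ^ 2) * k) * Xi r μ σ /
        (Xi r μ σ * cosh (Xi r μ σ * k) - μ / σ ^ 2 * sinh (Xi r μ σ * k)))

private lemma xiE1 (E3 E4 : ℝ) (h3 : E3 ≠ 0) (h4 : E4 ≠ 0) (hS : E4^2 - 1 ≠ 0) :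
    (E3 - E3⁻¹) / 2 / ((E4 - E4⁻¹) / 2) = (E3^2 - 1) * E4 / ((E4^2 - 1) * E3) := by
  have a3 : E3 - E3⁻¹ = (E3^2 - 1) / E3 := by field_simp
  have a4 : E4 - E4⁻¹ = (E4^2 - 1) / E4 := by field_simp
  rw [a3, a4, div_eq_div_iff (div_ne_zero (div_ne_zero hS h4) two_ne_zero) (mul_ne_zero hS h3)]
  field_simp

private lemma xiE2 (E3 E4 : ℝ) (h3 : E3 ≠ 0) (h4 : E4 ≠ 0) (hS : E4^2 - 1 ≠ 0) :
    (E4 / E3 - (E4 / E3)⁻¹) / 2 / ((E4 - E4⁻¹) / 2) = (E4^2 - E3^2) / ((E4^2 - 1) * E3) := by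
  have a3 : E4 / E3 - (E4 / E3)⁻¹ = (E4^2 - E3^2) / (E3 * E4) := by field_simp
  have a4 : E4 - E4⁻¹ = (E4^2 - 1) / E4 := by field_simp
  rw [a3, a4, div_eq_div_iff (div_ne_zero (div_ne_zero hS h4) two_ne_zero) (mul_ne_zero hS h3)]
  field_simp

private lemma xiE3 (b X E2 E4 : ℝ) (h2 : E2 ≠ 0) (h4 : E4 ≠ 0)
    (hA : X * (E4^2 + 1) - b * (E4^2 - 1) ≠ 0) :
    E2⁻¹ * X / (X * ((E4 + E4⁻¹) / 2) - b * ((E4 - E4⁻¹) / 2)) =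
      2 * X * E4 / (E2 * (X * (E4^2 + 1) - b * (E4^2 - 1))) := by
  have h : X * ((E4 + E4⁻¹) / 2) - b * ((E4 - E4⁻¹) / 2)
      = (X * (E4^2 + 1) - b * (E4^2 - 1)) / (2 * E4) := by
    field_simp
  rw [h]
  field_simp

private lemma xiE4 (b X E1 E2 E3 E4 : ℝ) (h2 : E2 ≠ 0) (h3 : E3 ≠ 0) (h4 : E4 ≠ 0)
    (hD : (X - b) * E4^2 + (X + b) ≠ 0) :
    E1 * ((X - b) * E3 + (X + b) * E3⁻¹) / (E2 * ((X - b) * E4 + (X + b) * E4⁻¹)) =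
      E1 * ((X - b) * E3^2 + (X + b)) * E4 / (E3 * E2 * ((X - b) * E4^2 + (X + b))) := by
  have hh : E2 * ((X - b) * E4 + (X + b) * E4⁻¹) = E2 * ((X - b) * E4^2 + (X + b)) / E4 := by
    rw [eq_div_iff h4]
    linear_combination (E2 * (X + b)) * (inv_mul_cancel₀ h4)
  have ha : E1 * ((X - b) * E3 + (X + b) * E3⁻¹) = E1 * ((X - b) * E3^2 + (X + b)) / E3 := by
    rw [eq_div_iff h3]
    linear_combination (E1 * (X + b)) * (inv_mul_cancel₀ h3)
  rw [hh, ha, div_div_div_eq, div_eq_div_iff (by positivity) (mul_ne_zero (mul_ne_zero h3 h2) hD)]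
  ring

private lemma xiAlg (b X E1 E2 E3 E4 : ℝ) (h2 : E2 ≠ 0) (h3 : E3 ≠ 0) (h4 : E4 ≠ 0)
    (hS : E4^2 - 1 ≠ 0)
    (hA : X * (E4^2 + 1) - b * (E4^2 - 1) ≠ 0)
    (hD : (X - b) * E4^2 + (X + b) ≠ 0) :
    E1 / E2 * ((E3^2 - 1) * E4 / ((E4^2 - 1) * E3)) +
      E1 * ((E4^2 - E3^2) / ((E4^2 - 1) * E3)) *
        (2 * X * E4 / (E2 * (X * (E4^2 + 1) - b * (E4^2 - 1)))) =
    E1 * ((X - b) * E3^2 + (X + b)) * E4 / (E3 * E2 * ((X - b) * E4^2 + (X + b))) := by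
  rw [show X * (E4^2 + 1) - b * (E4^2 - 1) = (X - b) * E4^2 + (X + b) by ring]
  generalize hF : (X - b) * E4^2 + (X + b) = F at hD ⊢
  field_simp
  rw [← hF]
  ring

private lemma expDeriv (c y : ℝ) :
    HasDerivAt (fun u : ℝ => Real.exp (c * u)) (c * Real.exp (c * y)) y := by
  simpa [mul_comm] using ((hasDerivAt_id y).const_mul c).exp

private lemma FDeriv (b X y : ℝ) :
    HasDerivAt (fun u : ℝ => exp (b*u) * ((X - b) * exp (X*u) + (X + b) * exp (-(X*u))))
      ((X^2 - b^2) * (exp (b*y) * (exp (X*y) - exp (-(X*y))))) y := by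
  have h3 : HasDerivAt (fun u : ℝ => exp (-(X*u))) (-X * exp (-(X*y))) y := by
    simpa [neg_mul] using expDeriv (-X) y
  have := (expDeriv b y).mul
    (((expDeriv X y).const_mul (X - b)).add (h3.const_mul (X + b)))
  simp only [Pi.mul_def, Pi.add_def, Pi.sub_def] at this
  refine this.congr_deriv ?_
  ring

private lemma F1Deriv (b X y : ℝ) :
    HasDerivAt (fun u : ℝ => exp (b*u) * (exp (X*u) - exp (-(X*u))))
      (exp (b*y) * ((X + b) * exp (X*y) + (X - b) * exp (-(X*y)))) y := by
  have h3 : HasDerivAt (fun u : ℝ => exp (-(X*u))) (-X * exp (-(X*y))) y := by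
    simpa [neg_mul] using expDeriv (-X) y
  have := (expDeriv b y).mul ((expDeriv X y).sub h3)
  simp only [Pi.mul_def, Pi.add_def, Pi.sub_def] at this
  refine this.congr_deriv ?_
  ring

theorem xi_properties (σ μ r k : ℝ) (hσ : 0 < σ) (hr : 0 < r) (hk : 0 < k) :
    -- (i) ξ is positive and (strictly) increasing on (0,k)
    (∀ y ∈ Set.Ioo (0 : ℝ) k, 0 < xiFormula r μ σ k y) ∧
      StrictMonoOn (fun y => xiFormula r μ σ k y) (Set.Ioo (0 : ℝ) k) ∧
      -- (ii) the ODE (1/2)σ²ξ'' − μξ' = rξ on (0,k) with Neumann condition ξ'(0) = 0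
      (∀ y ∈ Set.Ioo (0 : ℝ) k,
        (1 / 2) * σ ^ 2 * deriv (deriv (fun u => xiFormula r μ σ k u)) y -
            μ * deriv (fun u => xiFormula r μ σ k u) y =
          r * xiFormula r μ σ k y) ∧
      deriv (fun u => xiFormula r μ σ k u) 0 = 0 ∧
      -- (iii) ξ is strictly convex: ξ'' > 0 on (0,k)
      (∀ y ∈ Set.Ioo (0 : ℝ) k,
        0 < deriv (deriv (fun u => xiFormula r μ σ k u)) y) := by
  have hσ2 : (0:ℝ) < σ^2 := by positivity
  obtain ⟨b, hb⟩ : ∃ b, μ / σ ^ 2 = b := ⟨_, rfl⟩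
  obtain ⟨X, hX⟩ : ∃ X, Xi r μ σ = X := ⟨_, rfl⟩
  have hXpos : 0 < X := hX ▸ Real.sqrt_pos.mpr (by positivity)
  have hX2 : X ^ 2 = 2 * r / σ ^ 2 + b ^ 2 := by
    rw [← hX, Xi, sq_sqrt (by positivity), ← hb]
    field_simp
  have hrs : (0:ℝ) < 2 * r / σ ^ 2 := by positivity
  have hbX : b < X := by nlinarith [hrs, sq_nonneg (b - X), sq_nonneg (b + X)]
  have hbX' : -X < b := by nlinarith [hrs, sq_nonneg (b - X), sq_nonneg (b + X)]
  have hcpos : 0 < X^2 - b^2 := by rw [hX2]; linarith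
  have hSk : (0:ℝ) < Real.sinh (X * k) := Real.sinh_pos_iff.mpr (by positivity)
  have hA : 0 < X * Real.cosh (X * k) - b * Real.sinh (X * k) := by
    rw [Real.cosh_eq, Real.sinh_eq]
    nlinarith [Real.exp_pos (X*k), Real.exp_pos (-(X*k))]
  have hNpos : ∀ y : ℝ, 0 < exp (b*y) * ((X - b) * exp (X*y) + (X + b) * exp (-(X*y))) := by
    intro y
    have : (0:ℝ) < (X - b) * exp (X*y) + (X + b) * exp (-(X*y)) :=
      add_pos (mul_pos (by linarith) (exp_pos _)) (mul_pos (by linarith) (exp_pos _))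
    positivity
  have hGpos := hNpos k
  have hGne : exp (b*k) * ((X - b) * exp (X*k) + (X + b) * exp (-(X*k))) ≠ 0 := ne_of_gt hGpos
  -- the key closed form
  have key : ∀ y, xiFormula r μ σ k y =
      (exp (b*y) * ((X - b) * exp (X*y) + (X + b) * exp (-(X*y)))) /
      (exp (b*k) * ((X - b) * exp (X*k) + (X + b) * exp (-(X*k)))) := by
    intro y
    have hS2 : rexp (X*k) ^ 2 - 1 ≠ 0 := by
      have h1 : (1:ℝ) < rexp (X*k) := by
        rw [show (1:ℝ) = rexp 0 from (Real.exp_zero).symm]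
        exact Real.exp_lt_exp.mpr (by positivity)
      nlinarith
    have hA2 : X * (rexp (X*k)^2 + 1) - b * (rexp (X*k)^2 - 1) ≠ 0 := by
      have := hA
      rw [Real.cosh_eq, Real.sinh_eq, Real.exp_neg] at this
      have h4 := Real.exp_pos (X*k)
      intro h
      have : 0 < (X * (rexp (X*k)^2 + 1) - b * (rexp (X*k)^2 - 1)) / (2 * rexp (X*k)) := by
        rw [show (X * (rexp (X*k)^2 + 1) - b * (rexp (X*k)^2 - 1)) / (2 * rexp (X*k))
          = X * ((rexp (X*k) + (rexp (X*k))⁻¹)/2) - b * ((rexp (X*k) - (rexp (X*k))⁻¹)/2) by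
            field_simp]
        linarith
      rw [h] at this; simp at this
    have hD2 : (X - b) * rexp (X*k)^2 + (X + b) ≠ 0 := by
      have : 0 < (X - b) * rexp (X*k)^2 + (X + b) := by
        have h4 := Real.exp_pos (X*k)
        nlinarith
      linarith
    rw [xiFormula, hb, hX]
    rw [show b * (y - k) = b*y - b*k by ring, show X * (k - y) = X*k - X*y by ring,
      show -b * k = -(b*k) by ring]
    rw [Real.sinh_eq (X*k - X*y),
        show rexp (X*k - X*y) = rexp (X*k) / rexp (X*y) from Real.exp_sub _ _,
        show rexp (-(X*k - X*y)) = (rexp (X*k) / rexp (X*y))⁻¹ by rw [Real.exp_neg, Real.exp_sub]]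
    rw [Real.exp_sub, Real.exp_neg (b*k)]
    rw [Real.sinh_eq (X*y), Real.sinh_eq (X*k), Real.cosh_eq (X*k)]
    rw [Real.exp_neg (X*y), Real.exp_neg (X*k)]
    rw [xiE1 _ _ (exp_ne_zero _) (exp_ne_zero _) hS2,
        xiE2 _ _ (exp_ne_zero _) (exp_ne_zero _) hS2,
        xiE3 b X _ _ (exp_ne_zero _) (exp_ne_zero _) hA2]
    rw [xiE4 b X _ _ _ _ (exp_ne_zero _) (exp_ne_zero _) (exp_ne_zero _) hD2]
    exact xiAlg b X _ _ _ _ (exp_ne_zero _) (exp_ne_zero _) (exp_ne_zero _) hS2 hA2 hD2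
  have hfun : (fun u => xiFormula r μ σ k u) =
      (fun u => (exp (b*u) * ((X - b) * exp (X*u) + (X + b) * exp (-(X*u)))) /
        (exp (b*k) * ((X - b) * exp (X*k) + (X + b) * exp (-(X*k))))) := funext key
  -- first derivative
  have hFd : ∀ y, HasDerivAt (fun u => xiFormula r μ σ k u)
      ((X^2 - b^2) * (exp (b*y) * (exp (X*y) - exp (-(X*y)))) /
        (exp (b*k) * ((X - b) * exp (X*k) + (X + b) * exp (-(X*k))))) y := by
    intro y
    rw [hfun]
    exact (FDeriv b X y).div_const _
  have hd1 : deriv (fun u => xiFormula r μ σ k u) =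
      fun y => (X^2 - b^2) * (exp (b*y) * (exp (X*y) - exp (-(X*y)))) /
        (exp (b*k) * ((X - b) * exp (X*k) + (X + b) * exp (-(X*k)))) :=
    funext fun y => (hFd y).deriv
  -- second derivative
  have hFd2 : ∀ y, HasDerivAt
      (fun u => (X^2 - b^2) * (exp (b*u) * (exp (X*u) - exp (-(X*u)))) /
        (exp (b*k) * ((X - b) * exp (X*k) + (X + b) * exp (-(X*k)))))
      ((X^2 - b^2) * (exp (b*y) * ((X + b) * exp (X*y) + (X - b) * exp (-(X*y)))) /
        (exp (b*k) * ((X - b) * exp (X*k) + (X + b) * exp (-(X*k))))) y := by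
    intro y
    exact ((F1Deriv b X y).const_mul (X^2 - b^2)).div_const _
  have hd2 : deriv (deriv (fun u => xiFormula r μ σ k u)) =
      fun y => (X^2 - b^2) * (exp (b*y) * ((X + b) * exp (X*y) + (X - b) * exp (-(X*y)))) /
        (exp (b*k) * ((X - b) * exp (X*k) + (X + b) * exp (-(X*k)))) := by
    rw [hd1]
    exact funext fun y => (hFd2 y).deriv
  refine ⟨?_, ?_, ?_, ?_, ?_⟩
  · intro y _
    rw [key y]
    exact div_pos (hNpos y) hGpos
  · rw [hfun]
    apply strictMonoOn_of_deriv_pos (convex_Ioo 0 k)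
    · exact fun y _ => (((FDeriv b X y).div_const _).differentiableAt).continuousAt.continuousWithinAt
    · intro x hx
      rw [interior_Ioo] at hx
      rw [((FDeriv b X x).div_const _).deriv]
      have hEF : exp (-(X*x)) < exp (X*x) :=
        Real.exp_lt_exp.mpr (by nlinarith [hx.1])
      exact div_pos (mul_pos hcpos (mul_pos (exp_pos _) (by linarith))) hGpos
  · intro y _
    rw [hd2, hd1, key y]
    have hμ : μ = b * σ^2 := by rw [← hb]; field_simp
    have hc : (X^2 - b^2) * σ^2 = 2 * r := by
      rw [hX2]; field_simp; ring
    rw [hμ]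
    have main : (1/2) * σ^2 * ((X^2 - b^2) * (exp (b*y) * ((X + b) * exp (X*y) + (X - b) * exp (-(X*y)))))
        - b * σ^2 * ((X^2 - b^2) * (exp (b*y) * (exp (X*y) - exp (-(X*y)))))
        = r * (exp (b*y) * ((X - b) * exp (X*y) + (X + b) * exp (-(X*y)))) := by
      linear_combination ((1/2) * (exp (b*y) * ((X - b) * exp (X*y) + (X + b) * exp (-(X*y))))) * hc
    linear_combination main / (exp (b*k) * ((X - b) * exp (X*k) + (X + b) * exp (-(X*k))))
  · rw [hd1]
    simp
  · intro y hy
    rw [hd2]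
    have : (0:ℝ) < (X + b) * exp (X*y) + (X - b) * exp (-(X*y)) :=
      add_pos (mul_pos (by linarith) (exp_pos _)) (mul_pos (by linarith) (exp_pos _))
    exact div_pos (mul_pos hcpos (mul_pos (exp_pos _) this)) hGpos
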